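/- Let A be a binomial random variable with parameters n and a, and B a binomial random variable with parameters n and b (not necessarily independent of A). If 0 < b ≤ a ≤ 1, then P[A ≤ B] ≤ 2·exp(−(a−b)²·n/(8a)). -/

import Mathlib

open MeasureTheory Real

lemma my_exp_neg_le_quad {x : ℝ} (hx : 0 ≤ x) :
    Real.exp (-x) ≤ 1 - x + x ^ 2 / 2 := by
  have key : MonotoneOn (fun y : ℝ => 1 - y + y ^ 2 / 2 - Real.exp (-y)) (Set.Ici 0) := by
    apply monotoneOn_of_deriv_nonneg (convex_Ici 0)
    · fun_prop
    · apply Differentiable.differentiableOn; fun_prop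
    · intro y hy
      have h1 : HasDerivAt (fun y : ℝ => Real.exp (-y)) (-Real.exp (-y)) y := by
        simpa using (hasDerivAt_neg y).exp
      have h2 : HasDerivAt (fun y : ℝ => 1 - y + y ^ 2 / 2)
          (0 - 1 + (2 : ℕ) * y ^ 1 / 2) y :=
        (((hasDerivAt_const y (1:ℝ)).sub (hasDerivAt_id y)).add
          ((hasDerivAt_pow 2 y).div_const 2))
      have h3 := h2.sub h1
      rw [show (fun y : ℝ => 1 - y + y ^ 2 / 2 - Real.exp (-y)) =
          ((fun y : ℝ => 1 - y + y ^ 2 / 2) - fun y => Real.exp (-y)) from rfl, h3.deriv]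
      have := Real.add_one_le_exp (-y)
      push_cast
      nlinarith
  have h0 := key Set.self_mem_Ici (Set.mem_Ici.mpr hx) hx
  simp at h0
  nlinarith

lemma my_exp_le_cubic {x : ℝ} (h0 : 0 ≤ x) (h1 : x ≤ 1) :
    Real.exp x ≤ 1 + x + x ^ 2 / 2 + (2 / 9) * x ^ 3 := by
  have h := Real.exp_bound' h0 h1 (n := 3) (by norm_num)
  simp [Finset.sum_range_succ, Nat.factorial] at h
  nlinarith

/-- Generic Chernoff-type tail bound from a pmf hypothesis. `sgn = -1` gives a lower tail
(`X ≤ c`), handled below; here the lower tail. -/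
lemma my_tailA {Ω : Type*} [MeasurableSpace Ω] (ℙ : Measure Ω) [IsFiniteMeasure ℙ]
    (n : ℕ) (p : ℝ) (hp0 : 0 ≤ p) (hp1 : p ≤ 1) (X : Ω → ℕ)
    (hX : ∀ k : ℕ, (ℙ {ω | X ω = k}).toReal = (n.choose k : ℝ) * p ^ k * (1 - p) ^ (n - k))
    (t c : ℝ) (ht : 0 ≤ t) :
    ℙ {ω | (X ω : ℝ) ≤ c} ≤
      ENNReal.ofReal (Real.exp (t * c) * (p * Real.exp (-t) + (1 - p)) ^ n) := by
  set pA : ℕ → ℝ := fun k => (n.choose k : ℝ) * p ^ k * (1 - p) ^ (n - k) with hpA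
  have hnn : ∀ k, 0 ≤ pA k := fun k => by
    have : (0:ℝ) ≤ 1 - p := by linarith
    positivity
  set g : ℕ → ℝ := fun k => pA k * Real.exp (t * (c - k)) with hg
  have hgnn : ∀ k, 0 ≤ g k := fun k => mul_nonneg (hnn k) (Real.exp_pos _).le
  have hzero : ∀ k ∉ Finset.range (n + 1), g k = 0 := by
    intro k hk
    have hkn : n < k := by simpa using hk
    simp [g, pA, Nat.choose_eq_zero_of_lt hkn]
  have hsummable : Summable g := summable_of_ne_finset_zero hzero
  calc ℙ {ω | (X ω : ℝ) ≤ c}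
      ≤ ℙ (⋃ k : ℕ, {ω | X ω = k ∧ (k : ℝ) ≤ c}) := by
        apply measure_mono
        intro ω hω
        exact Set.mem_iUnion.mpr ⟨X ω, rfl, hω⟩
    _ ≤ ∑' k, ℙ {ω | X ω = k ∧ (k : ℝ) ≤ c} := measure_iUnion_le _
    _ ≤ ∑' k, ENNReal.ofReal (g k) := by
        apply ENNReal.tsum_le_tsum
        intro k
        by_cases hk : (k : ℝ) ≤ c
        · have h1 : {ω | X ω = k ∧ (k : ℝ) ≤ c} ⊆ {ω | X ω = k} := fun ω h => h.1
          refine (measure_mono h1).trans ?_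
          have h2 : ℙ {ω | X ω = k} = ENNReal.ofReal (pA k) := by
            rw [← ENNReal.ofReal_toReal (measure_ne_top ℙ {ω | X ω = k}), hX k]
          rw [h2]
          apply ENNReal.ofReal_le_ofReal
          have hexp : (1 : ℝ) ≤ Real.exp (t * (c - k)) := by
            rw [← Real.exp_zero]
            exact Real.exp_le_exp.mpr (by nlinarith)
          exact le_mul_of_one_le_right (hnn k) hexp
        · have hempty : {ω | X ω = k ∧ (k : ℝ) ≤ c} = ∅ := by
            ext ω; simp only [Set.mem_setOf_eq, Set.mem_empty_iff_false, iff_false]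
            rintro ⟨-, h⟩; exact hk h
          rw [hempty, measure_empty]
          exact zero_le
    _ = ENNReal.ofReal (∑' k, g k) := (ENNReal.ofReal_tsum_of_nonneg hgnn hsummable).symm
    _ = ENNReal.ofReal (Real.exp (t * c) * (p * Real.exp (-t) + (1 - p)) ^ n) := by
        congr 1
        rw [tsum_eq_sum hzero]
        have hbin : (p * Real.exp (-t) + (1 - p)) ^ n =
            ∑ k ∈ Finset.range (n + 1),
              (p * Real.exp (-t)) ^ k * (1 - p) ^ (n - k) * (n.choose k : ℝ) :=
          add_pow _ _ n
        rw [hbin, Finset.mul_sum]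
        apply Finset.sum_congr rfl
        intro k _
        have hek : Real.exp (t * (c - k)) = Real.exp (t * c) * Real.exp (-t) ^ k := by
          rw [← Real.exp_nat_mul, ← Real.exp_add]
          ring_nf
        rw [hg]
        simp only [pA]
        rw [hek, mul_pow]
        ring

lemma my_tailB {Ω : Type*} [MeasurableSpace Ω] (ℙ : Measure Ω) [IsFiniteMeasure ℙ]
    (n : ℕ) (p : ℝ) (hp0 : 0 ≤ p) (hp1 : p ≤ 1) (X : Ω → ℕ)
    (hX : ∀ k : ℕ, (ℙ {ω | X ω = k}).toReal = (n.choose k : ℝ) * p ^ k * (1 - p) ^ (n - k))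
    (t c : ℝ) (ht : 0 ≤ t) :
    ℙ {ω | c ≤ (X ω : ℝ)} ≤
      ENNReal.ofReal (Real.exp (-(t * c)) * (p * Real.exp t + (1 - p)) ^ n) := by
  set pA : ℕ → ℝ := fun k => (n.choose k : ℝ) * p ^ k * (1 - p) ^ (n - k) with hpA
  have hnn : ∀ k, 0 ≤ pA k := fun k => by
    have : (0:ℝ) ≤ 1 - p := by linarith
    positivity
  set g : ℕ → ℝ := fun k => pA k * Real.exp (t * (k - c)) with hg
  have hgnn : ∀ k, 0 ≤ g k := fun k => mul_nonneg (hnn k) (Real.exp_pos _).le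
  have hzero : ∀ k ∉ Finset.range (n + 1), g k = 0 := by
    intro k hk
    have hkn : n < k := by simpa using hk
    simp [g, pA, Nat.choose_eq_zero_of_lt hkn]
  have hsummable : Summable g := summable_of_ne_finset_zero hzero
  calc ℙ {ω | c ≤ (X ω : ℝ)}
      ≤ ℙ (⋃ k : ℕ, {ω | X ω = k ∧ c ≤ (k : ℝ)}) := by
        apply measure_mono
        intro ω hω
        exact Set.mem_iUnion.mpr ⟨X ω, rfl, hω⟩
    _ ≤ ∑' k, ℙ {ω | X ω = k ∧ c ≤ (k : ℝ)} := measure_iUnion_le _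
    _ ≤ ∑' k, ENNReal.ofReal (g k) := by
        apply ENNReal.tsum_le_tsum
        intro k
        by_cases hk : c ≤ (k : ℝ)
        · have h1 : {ω | X ω = k ∧ c ≤ (k : ℝ)} ⊆ {ω | X ω = k} := fun ω h => h.1
          refine (measure_mono h1).trans ?_
          have h2 : ℙ {ω | X ω = k} = ENNReal.ofReal (pA k) := by
            rw [← ENNReal.ofReal_toReal (measure_ne_top ℙ {ω | X ω = k}), hX k]
          rw [h2]
          apply ENNReal.ofReal_le_ofReal
          have hexp : (1 : ℝ) ≤ Real.exp (t * (k - c)) := by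
            rw [← Real.exp_zero]
            exact Real.exp_le_exp.mpr (by nlinarith)
          exact le_mul_of_one_le_right (hnn k) hexp
        · have hempty : {ω | X ω = k ∧ c ≤ (k : ℝ)} = ∅ := by
            ext ω; simp only [Set.mem_setOf_eq, Set.mem_empty_iff_false, iff_false]
            rintro ⟨-, h⟩; exact hk h
          rw [hempty, measure_empty]
          exact zero_le
    _ = ENNReal.ofReal (∑' k, g k) := (ENNReal.ofReal_tsum_of_nonneg hgnn hsummable).symm
    _ = ENNReal.ofReal (Real.exp (-(t * c)) * (p * Real.exp t + (1 - p)) ^ n) := by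
        congr 1
        rw [tsum_eq_sum hzero]
        have hbin : (p * Real.exp t + (1 - p)) ^ n =
            ∑ k ∈ Finset.range (n + 1),
              (p * Real.exp t) ^ k * (1 - p) ^ (n - k) * (n.choose k : ℝ) :=
          add_pow _ _ n
        rw [hbin, Finset.mul_sum]
        apply Finset.sum_congr rfl
        intro k _
        have hek : Real.exp (t * (k - c)) = Real.exp (-(t * c)) * Real.exp t ^ k := by
          rw [← Real.exp_nat_mul, ← Real.exp_add]
          ring_nf
        rw [hg]
        simp only [pA]
        rw [hek, mul_pow]
        ring

lemma my_core1 (n : ℕ) (a b : ℝ) (hb0 : 0 < b) (hba : b ≤ a) (ha1 : a ≤ 1) :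
    Real.exp ((a - b) / (2 * a) * ((a + b) / 2 * n)) *
      (a * Real.exp (-((a - b) / (2 * a))) + (1 - a)) ^ n ≤
      Real.exp (-((a - b) ^ 2 * n) / (8 * a)) := by
  have ha0 : 0 < a := lt_of_lt_of_le hb0 hba
  set t : ℝ := (a - b) / (2 * a) with ht_def
  have ht0 : 0 ≤ t := div_nonneg (by linarith) (by linarith)
  have hbase : 0 ≤ a * Real.exp (-t) + (1 - a) := by
    have := (Real.exp_pos (-t)).le
    nlinarith
  have hb1 : a * Real.exp (-t) + (1 - a) ≤ Real.exp (a * (Real.exp (-t) - 1)) := by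
    have := Real.add_one_le_exp (a * (Real.exp (-t) - 1))
    nlinarith
  have hpow : (a * Real.exp (-t) + (1 - a)) ^ n ≤ Real.exp (n * (a * (Real.exp (-t) - 1))) := by
    rw [Real.exp_nat_mul]
    exact pow_le_pow_left₀ hbase hb1 n
  have hchain : Real.exp (t * ((a + b) / 2 * n)) * (a * Real.exp (-t) + (1 - a)) ^ n ≤
      Real.exp (t * ((a + b) / 2 * n) + n * (a * (Real.exp (-t) - 1))) := by
    rw [Real.exp_add]
    exact mul_le_mul_of_nonneg_left hpow (Real.exp_pos _).le
  refine hchain.trans (Real.exp_le_exp.mpr ?_)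
  have hq := my_exp_neg_le_quad ht0
  have hX : a * (Real.exp (-t) - 1) ≤ a * (-t + t ^ 2 / 2) := by nlinarith
  have heq : t * ((a + b) / 2) + a * (-t + t ^ 2 / 2) = -((a - b) ^ 2) / (8 * a) := by
    rw [ht_def]; field_simp; ring
  calc t * ((a + b) / 2 * n) + n * (a * (Real.exp (-t) - 1))
      ≤ t * ((a + b) / 2 * n) + n * (a * (-t + t ^ 2 / 2)) := by
        have := mul_le_mul_of_nonneg_left hX (Nat.cast_nonneg (α := ℝ) n)
        linarith
    _ = n * (t * ((a + b) / 2) + a * (-t + t ^ 2 / 2)) := by ring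
    _ = n * (-((a - b) ^ 2) / (8 * a)) := by rw [heq]
    _ = -((a - b) ^ 2 * n) / (8 * a) := by ring

lemma my_core2 (n : ℕ) (a b : ℝ) (hb0 : 0 < b) (hba : b ≤ a) (ha1 : a ≤ 1) :
    Real.exp (-((a - b) / (2 * a) * ((a + b) / 2 * n))) *
      (b * Real.exp ((a - b) / (2 * a)) + (1 - b)) ^ n ≤
      Real.exp (-((a - b) ^ 2 * n) / (8 * a)) := by
  have ha0 : 0 < a := lt_of_lt_of_le hb0 hba
  set t : ℝ := (a - b) / (2 * a) with ht_def
  have ht0 : 0 ≤ t := div_nonneg (by linarith) (by linarith)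
  have ht1 : t ≤ 1 := by
    rw [ht_def, div_le_one (by linarith)]
    linarith
  have hbase : 0 ≤ b * Real.exp t + (1 - b) := by
    have := (Real.exp_pos t).le
    nlinarith
  have hb1 : b * Real.exp t + (1 - b) ≤ Real.exp (b * (Real.exp t - 1)) := by
    have := Real.add_one_le_exp (b * (Real.exp t - 1))
    nlinarith
  have hpow : (b * Real.exp t + (1 - b)) ^ n ≤ Real.exp (n * (b * (Real.exp t - 1))) := by
    rw [Real.exp_nat_mul]
    exact pow_le_pow_left₀ hbase hb1 n
  have hchain : Real.exp (-(t * ((a + b) / 2 * n))) * (b * Real.exp t + (1 - b)) ^ n ≤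
      Real.exp (-(t * ((a + b) / 2 * n)) + n * (b * (Real.exp t - 1))) := by
    rw [Real.exp_add]
    exact mul_le_mul_of_nonneg_left hpow (Real.exp_pos _).le
  refine hchain.trans (Real.exp_le_exp.mpr ?_)
  have hq := my_exp_le_cubic ht0 ht1
  have hX : b * (Real.exp t - 1) ≤ b * (t + t ^ 2 / 2 + (2 / 9) * t ^ 3) := by nlinarith
  have hd : 0 ≤ a - b := by linarith
  have heq : -(t * ((a + b) / 2)) + b * (t + t ^ 2 / 2 + (2 / 9) * t ^ 3) =
      -((a - b) ^ 2) / (8 * a) - (a - b) ^ 3 * (9 * a - 2 * b) / (72 * a ^ 3) := by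
    rw [ht_def]; field_simp; ring
  have hpos : 0 ≤ (a - b) ^ 3 * (9 * a - 2 * b) / (72 * a ^ 3) :=
    div_nonneg (mul_nonneg (pow_nonneg hd 3) (by linarith)) (by positivity)
  calc -(t * ((a + b) / 2 * n)) + n * (b * (Real.exp t - 1))
      ≤ -(t * ((a + b) / 2 * n)) + n * (b * (t + t ^ 2 / 2 + (2 / 9) * t ^ 3)) := by
        have := mul_le_mul_of_nonneg_left hX (Nat.cast_nonneg (α := ℝ) n)
        linarith
    _ = n * (-(t * ((a + b) / 2)) + b * (t + t ^ 2 / 2 + (2 / 9) * t ^ 3)) := by ring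
    _ ≤ n * (-((a - b) ^ 2) / (8 * a)) := by
        rw [heq]
        have hn : (0:ℝ) ≤ n := Nat.cast_nonneg n
        nlinarith
    _ = -((a - b) ^ 2 * n) / (8 * a) := by ring

/-- Lemma 10 (wrong order via Chernoff): if `A ~ Bin(n,a)` and `B ~ Bin(n,b)` (not
necessarily independent) with `0 < b ≤ a ≤ 1`, then
`P[A ≤ B] ≤ 2 exp(-(a-b)² n / (8a))`. -/
theorem stmt_0 {Ω : Type*} [MeasurableSpace Ω] (ℙ : Measure Ω) [IsProbabilityMeasure ℙ]
    (n : ℕ) (a b : ℝ) (hb0 : 0 < b) (hba : b ≤ a) (ha1 : a ≤ 1)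
    (A B : Ω → ℕ)
    (hA : ∀ k : ℕ, (ℙ {ω | A ω = k}).toReal = (n.choose k : ℝ) * a ^ k * (1 - a) ^ (n - k))
    (hB : ∀ k : ℕ, (ℙ {ω | B ω = k}).toReal = (n.choose k : ℝ) * b ^ k * (1 - b) ^ (n - k)) :
    (ℙ {ω | A ω ≤ B ω}).toReal ≤ 2 * Real.exp (-((a - b) ^ 2 * n) / (8 * a)) := by
  have ha0 : 0 < a := lt_of_lt_of_le hb0 hba
  set t : ℝ := (a - b) / (2 * a) with ht_def
  set c : ℝ := (a + b) / 2 * n with hc_def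
  have ht0 : 0 ≤ t := div_nonneg (by linarith) (by linarith)
  have hsub : {ω | A ω ≤ B ω} ⊆ {ω | (A ω : ℝ) ≤ c} ∪ {ω | c ≤ (B ω : ℝ)} := by
    intro ω hω
    by_cases h : (A ω : ℝ) ≤ c
    · exact Or.inl h
    · refine Or.inr (le_trans (le_of_not_ge h) ?_)
      exact_mod_cast hω
  have h1 := my_tailA ℙ n a (by linarith) ha1 A hA t c ht0
  have h2 := my_tailB ℙ n b hb0.le (hba.trans ha1) B hB t c ht0
  have hE1 : 0 ≤ Real.exp (t * c) * (a * Real.exp (-t) + (1 - a)) ^ n := by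
    have h := (Real.exp_pos (-t)).le
    have : 0 ≤ a * Real.exp (-t) + (1 - a) := by nlinarith
    positivity
  have hE2 : 0 ≤ Real.exp (-(t * c)) * (b * Real.exp t + (1 - b)) ^ n := by
    have h := (Real.exp_pos t).le
    have hb1 : b ≤ 1 := hba.trans ha1
    have : 0 ≤ b * Real.exp t + (1 - b) := by nlinarith
    positivity
  have hmain : ℙ {ω | A ω ≤ B ω} ≤
      ENNReal.ofReal (Real.exp (t * c) * (a * Real.exp (-t) + (1 - a)) ^ n +
        Real.exp (-(t * c)) * (b * Real.exp t + (1 - b)) ^ n) := by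
    rw [ENNReal.ofReal_add hE1 hE2]
    calc ℙ {ω | A ω ≤ B ω} ≤ ℙ ({ω | (A ω : ℝ) ≤ c} ∪ {ω | c ≤ (B ω : ℝ)}) :=
          measure_mono hsub
      _ ≤ ℙ {ω | (A ω : ℝ) ≤ c} + ℙ {ω | c ≤ (B ω : ℝ)} := measure_union_le _ _
      _ ≤ _ := add_le_add h1 h2
  have hsum : Real.exp (t * c) * (a * Real.exp (-t) + (1 - a)) ^ n +
      Real.exp (-(t * c)) * (b * Real.exp t + (1 - b)) ^ n ≤
      2 * Real.exp (-((a - b) ^ 2 * n) / (8 * a)) := by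
    have g1 := my_core1 n a b hb0 hba ha1
    have g2 := my_core2 n a b hb0 hba ha1
    rw [ht_def, hc_def]
    linarith
  refine ENNReal.toReal_le_of_le_ofReal (by positivity) ?_
  exact hmain.trans (ENNReal.ofReal_le_ofReal hsum)
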